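/- Let A ∈ ℝ^{n×d} with n ≤ d satisfy AAᵀ = I_n, let y ∈ {−1, +1}ⁿ with n₊ := #{i : y_i = +1} ≥ 1 and n₋ := #{i : y_i = −1} ≥ 1, and let β > 0. Consider the hinge-loss objective H(U, w) = Σ_{i=1}^n max{0, 1 − y_i ((AU)_+ w)_i} + β‖w‖₁ over all widths m and parameters with ‖u_j‖₂ ≤ 1 for every j. Then an optimal solution is given by the (at most two-neuron) network with u₁ = Aᵀ(y)_+/√n₊ and w₁ = √n₊ if β < √n₊, w₁ any value in [0, √n₊] if β = √n₊, and (u₁, w₁) = (0, 0) if β > √n₊; together with u₂ = Aᵀ(−y)_+/√n₋ and w₂ = −√n₋ if β < √n₋, w₂ = −w₋ for any w₋ ∈ [0, √n₋] if β = √n₋, and (u₂, w₂) = (0, 0) if β > √n₋; each of these choices attains the infimum of H. -/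

import Mathlib

open Finset Matrix

/-- Euclidean (ℓ2) norm of a finite-dimensional real vector. -/
noncomputable def l2norm {k : ℕ} (x : Fin k → ℝ) : ℝ := Real.sqrt (∑ i, x i ^ 2)

/-- Entrywise ReLU of a vector. -/
def reluV {k : ℕ} (x : Fin k → ℝ) : Fin k → ℝ := fun i => max (x i) 0

/-- Output `(AU)_+ w = ∑_j w_j (A u_j)_+` of a bias-free two-layer ReLU network. -/
noncomputable def bfOut {n d m : ℕ} (A : Matrix (Fin n) (Fin d) ℝ)
    (U : Fin m → Fin d → ℝ) (w : Fin m → ℝ) : Fin n → ℝ :=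
  ∑ j, w j • fun i => max (A.mulVec (U j) i) 0

/-- The hinge-loss objective `∑ᵢ max(0, 1 - yᵢ((AU)₊w)ᵢ) + β‖w‖₁`. -/
noncomputable def hingeObj {n d m : ℕ} (A : Matrix (Fin n) (Fin d) ℝ) (y : Fin n → ℝ)
    (β : ℝ) (U : Fin m → Fin d → ℝ) (w : Fin m → ℝ) : ℝ :=
  (∑ i, max 0 (1 - y i * bfOut A U w i)) + β * ∑ j, |w j|

/-- `Aᵀ` is an isometry when `AAᵀ = 1`. -/
lemma aux_trans_isometry {n d : ℕ} (A : Matrix (Fin n) (Fin d) ℝ) (hA : A * Aᵀ = 1)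
    (x : Fin n → ℝ) : ∑ k, (Aᵀ.mulVec x k) ^ 2 = ∑ i, x i ^ 2 := by
  have h : Aᵀ.mulVec x ⬝ᵥ Aᵀ.mulVec x = x ⬝ᵥ x := by
    rw [dotProduct_mulVec, vecMul_transpose, mulVec_mulVec, hA, one_mulVec]
  simpa [dotProduct, sq] using h

/-- `A` is a coisometry when `AAᵀ = 1`. -/
lemma aux_coisometry {n d : ℕ} (A : Matrix (Fin n) (Fin d) ℝ) (hA : A * Aᵀ = 1)
    (u : Fin d → ℝ) : ∑ i, (A.mulVec u i) ^ 2 ≤ ∑ k, u k ^ 2 := by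
  set v : Fin d → ℝ := Aᵀ.mulVec (A.mulVec u) with hv
  have t1 : ∑ k, u k * v k = ∑ i, (A.mulVec u i) ^ 2 := by
    have h : A.mulVec u ⬝ᵥ A.mulVec u = (A.mulVec u ᵥ* A) ⬝ᵥ u := by
      rw [dotProduct_mulVec]
    rw [← mulVec_transpose] at h
    have h2 : v ⬝ᵥ u = ∑ i, (A.mulVec u i)^2 := by
      rw [← h]; simp [dotProduct, sq]
    rw [← h2]; simp [dotProduct, mul_comm]
  have t2 : ∑ k, v k ^ 2 = ∑ i, (A.mulVec u i) ^ 2 :=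
    aux_trans_isometry A hA (A.mulVec u)
  have h0 : 0 ≤ ∑ k, (u k - v k) ^ 2 := Finset.sum_nonneg fun k _ => sq_nonneg _
  have e : ∑ k, (u k - v k) ^ 2
      = ∑ k, u k ^ 2 - 2 * ∑ k, u k * v k + ∑ k, v k ^ 2 := by
    have hpt : ∀ k : Fin d, (u k - v k) ^ 2 = u k ^ 2 - 2 * (u k * v k) + v k ^ 2 :=
      fun k => by ring
    simp_rw [hpt, Finset.sum_add_distrib, Finset.sum_sub_distrib, ← Finset.mul_sum]
  rw [e, t1, t2] at h0
  linarith

/-- pointwise hinge lower bound -/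
lemma aux_relu_lb (lam t : ℝ) (h0 : 0 ≤ lam) (h1 : lam ≤ 1) : lam * t ≤ max 0 t := by
  rcases le_or_gt t 0 with h | h
  · exact le_trans (mul_nonpos_of_nonneg_of_nonpos h0 h) (le_max_left _ _)
  · exact le_trans (by nlinarith) (le_max_right _ _)

/-- scalar one-neuron fact -/
lemma aux_scalar (s β w : ℝ) (hs : 0 < s) (hβ : 0 < β)
    (h : (β < s → w = s) ∧ (β = s → 0 ≤ w ∧ w ≤ s) ∧ (s < β → w = 0)) :
    s ^ 2 * max 0 (1 - w * s⁻¹) + β * w = s * min s β ∧ 0 ≤ w := by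
  obtain ⟨h1, h2, h3⟩ := h
  rcases lt_trichotomy β s with hc | hc | hc
  · have hw := h1 hc
    subst hw
    rw [mul_inv_cancel₀ hs.ne', min_eq_right hc.le]
    simp [hs.le, le_of_lt hβ, mul_comm]
  · obtain ⟨hw0, hws⟩ := h2 hc
    rw [hc]
    have : max 0 (1 - w * s⁻¹) = 1 - w * s⁻¹ := by
      rw [max_eq_right]
      have : w * s⁻¹ ≤ 1 := by
        rw [← mul_inv_cancel₀ hs.ne']
        exact mul_le_mul_of_nonneg_right hws (by positivity)
      linarith
    rw [this, min_self]
    constructor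
    · field_simp; ring
    · exact hw0
  · have hw := h3 hc
    subst hw
    rw [min_eq_left hc.le]
    simp [sq]

lemma aux_lb {n d m : ℕ} (A : Matrix (Fin n) (Fin d) ℝ) (hA : A * Aᵀ = 1)
    (y : Fin n → ℝ) (hy : ∀ i, y i = 1 ∨ y i = -1) (β : ℝ) (hβ : 0 < β)
    (hp : 1 ≤ (Finset.univ.filter fun i => y i = 1).card)
    (hm : 1 ≤ (Finset.univ.filter fun i => y i = -1).card)
    (U : Fin m → Fin d → ℝ) (w : Fin m → ℝ) (hU : ∀ j, l2norm (U j) ≤ 1) :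
    Real.sqrt (((Finset.univ.filter fun i => y i = 1).card : ℝ)) *
      min (Real.sqrt (((Finset.univ.filter fun i => y i = 1).card : ℝ))) β +
    Real.sqrt (((Finset.univ.filter fun i => y i = -1).card : ℝ)) *
      min (Real.sqrt (((Finset.univ.filter fun i => y i = -1).card : ℝ))) β ≤
    hingeObj A y β U w := by
  classical
  set P := Finset.univ.filter fun i => y i = 1 with hP
  set N := Finset.univ.filter fun i => y i = -1 with hNdef
  set sp := Real.sqrt (P.card : ℝ) with hspdef
  set sq := Real.sqrt (N.card : ℝ) with hsqdef
  have hspc : (0:ℝ) < (P.card : ℝ) := by exact_mod_cast hp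
  have hsqc : (0:ℝ) < (N.card : ℝ) := by exact_mod_cast hm
  have hsp : 0 < sp := Real.sqrt_pos.mpr hspc
  have hsq : 0 < sq := Real.sqrt_pos.mpr hsqc
  have hsp2 : sp ^ 2 = (P.card : ℝ) := Real.sq_sqrt hspc.le
  have hsq2 : sq ^ 2 = (N.card : ℝ) := Real.sq_sqrt hsqc.le
  have hN : N = Finset.univ.filter fun i => ¬ y i = 1 := by
    ext i
    simp only [hNdef, Finset.mem_filter, Finset.mem_univ, true_and]
    constructor
    · intro h h1; rw [h1] at h; norm_num at h
    · intro h; exact (hy i).resolve_left h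
  set lp := min 1 (β / sp) with hlpdef
  set ln := min 1 (β / sq) with hlndef
  have hlp0 : 0 ≤ lp := le_min (by norm_num) (by positivity)
  have hln0 : 0 ≤ ln := le_min (by norm_num) (by positivity)
  have hlp1 : lp ≤ 1 := min_le_left _ _
  have hln1 : ln ≤ 1 := min_le_left _ _
  have hlpsp : lp * sp = min sp β := by
    rcases le_total sp β with h | h
    · rw [min_eq_left h, hlpdef, min_eq_left (by rw [le_div_iff₀ hsp]; linarith), one_mul]
    · rw [min_eq_right h, hlpdef, min_eq_right (by rw [div_le_one hsp]; linarith),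
        div_mul_cancel₀ _ hsp.ne']
  have hlnsq : ln * sq = min sq β := by
    rcases le_total sq β with h | h
    · rw [min_eq_left h, hlndef, min_eq_left (by rw [le_div_iff₀ hsq]; linarith), one_mul]
    · rw [min_eq_right h, hlndef, min_eq_right (by rw [div_le_one hsq]; linarith),
        div_mul_cancel₀ _ hsq.ne']
  -- neuron-wise sums over positive / negative classes
  set g : Fin m → Fin n → ℝ := fun j i => max (A.mulVec (U j) i) 0 with hg
  set a : Fin m → ℝ := fun j => ∑ i ∈ P, g j i with ha
  set b : Fin m → ℝ := fun j => ∑ i ∈ N, g j i with hb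
  have hg0 : ∀ j i, 0 ≤ g j i := fun j i => le_max_right _ _
  have ha0 : ∀ j, 0 ≤ a j := fun j => Finset.sum_nonneg fun i _ => hg0 j i
  have hb0 : ∀ j, 0 ≤ b j := fun j => Finset.sum_nonneg fun i _ => hg0 j i
  have hUsq : ∀ j, ∑ k, (U j k) ^ 2 ≤ 1 := by
    intro j
    have h1 := hU j
    have h2 : 0 ≤ ∑ k, (U j k) ^ 2 := Finset.sum_nonneg fun k _ => sq_nonneg _
    have h3 := Real.sq_sqrt h2
    have h4 := Real.sqrt_nonneg (∑ k, (U j k) ^ 2)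
    rw [l2norm] at h1
    nlinarith
  have hgsq : ∀ j, ∀ (s : Finset (Fin n)), ∑ i ∈ s, (g j i) ^ 2 ≤ 1 := by
    intro j s
    have h1 : ∑ i ∈ s, (g j i) ^ 2 ≤ ∑ i, (A.mulVec (U j) i) ^ 2 := by
      apply le_trans (Finset.sum_le_sum_of_subset_of_nonneg (Finset.subset_univ s)
        (fun i _ _ => sq_nonneg _))
      apply Finset.sum_le_sum
      intro i _
      rcases le_or_gt (A.mulVec (U j) i) 0 with h | h
      · simp [hg, max_eq_right h, sq_nonneg]
      · simp [hg, max_eq_left h.le]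
    exact le_trans h1 (le_trans (aux_coisometry A hA (U j)) (hUsq j))
  have hab : ∀ j, a j ≤ sp ∧ b j ≤ sq := by
    intro j
    constructor
    · have hcs := Finset.sum_mul_sq_le_sq_mul_sq P (fun _ => (1:ℝ)) (g j)
      simp only [one_mul, one_pow, Finset.sum_const, nsmul_eq_mul, mul_one] at hcs
      have := hgsq j P
      nlinarith [ha0 j, hsp, hsp2]
    · have hcs := Finset.sum_mul_sq_le_sq_mul_sq N (fun _ => (1:ℝ)) (g j)
      simp only [one_mul, one_pow, Finset.sum_const, nsmul_eq_mul, mul_one] at hcs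
      have := hgsq j N
      nlinarith [hb0 j, hsq, hsq2]
  have hpaβ : ∀ j, lp * a j ≤ β := by
    intro j
    calc lp * a j ≤ lp * sp := mul_le_mul_of_nonneg_left (hab j).1 hlp0
    _ = min sp β := hlpsp
    _ ≤ β := min_le_right _ _
  have hnbβ : ∀ j, ln * b j ≤ β := by
    intro j
    calc ln * b j ≤ ln * sq := mul_le_mul_of_nonneg_left (hab j).2 hln0
    _ = min sq β := hlnsq
    _ ≤ β := min_le_right _ _
  -- bfOut as a double sum
  have hf : ∀ i, bfOut A U w i = ∑ j, w j * g j i := by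
    intro i
    simp [bfOut, Finset.sum_apply, hg]
  have hfP : ∑ i ∈ P, bfOut A U w i = ∑ j, w j * a j := by
    simp_rw [hf, ha]
    rw [Finset.sum_comm]
    simp_rw [← Finset.mul_sum]
  have hfN : ∑ i ∈ N, bfOut A U w i = ∑ j, w j * b j := by
    simp_rw [hf, hb]
    rw [Finset.sum_comm]
    simp_rw [← Finset.mul_sum]
  -- Step 1: pointwise lower bound of hinge by linear functional
  have step1 : ∑ i, (if y i = 1 then lp * (1 - bfOut A U w i)
      else ln * (1 + bfOut A U w i)) ≤ ∑ i, max 0 (1 - y i * bfOut A U w i) := by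
    apply Finset.sum_le_sum
    intro i _
    rcases hy i with h1 | h1
    · rw [if_pos h1, h1, one_mul]
      exact aux_relu_lb _ _ hlp0 hlp1
    · rw [if_neg (by rw [h1]; norm_num), h1]
      have : 1 - (-1) * bfOut A U w i = 1 + bfOut A U w i := by ring
      rw [this]
      exact aux_relu_lb _ _ hln0 hln1
  -- Step 2: evaluate the linear functional
  have step2 : ∑ i, (if y i = 1 then lp * (1 - bfOut A U w i)
      else ln * (1 + bfOut A U w i))
      = lp * (P.card : ℝ) + ln * (N.card : ℝ)
        - lp * (∑ j, w j * a j) + ln * (∑ j, w j * b j) := by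
    rw [Finset.sum_ite, ← hP, ← hN]
    rw [← Finset.mul_sum, ← Finset.mul_sum, Finset.sum_sub_distrib,
      Finset.sum_add_distrib, Finset.sum_const, Finset.sum_const, hfP, hfN]
    simp only [nsmul_eq_mul, mul_one]
    ring
  -- Step 3: the cross terms beat -β‖w‖₁
  have step3 : -(β * ∑ j, |w j|) ≤ - lp * (∑ j, w j * a j) + ln * (∑ j, w j * b j) := by
    have : - lp * (∑ j, w j * a j) + ln * (∑ j, w j * b j)
        = ∑ j, w j * (ln * b j - lp * a j) := by
      rw [Finset.mul_sum, Finset.mul_sum, ← Finset.sum_add_distrib]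
      congr 1; ext j; ring
    rw [this]
    have : -(β * ∑ j, |w j|) = ∑ j, -(β * |w j|) := by
      rw [Finset.mul_sum, ← Finset.sum_neg_distrib]
    rw [this]
    apply Finset.sum_le_sum
    intro j _
    have hc : |ln * b j - lp * a j| ≤ β := by
      rw [abs_le]
      constructor
      · have := hpaβ j
        have h1 : 0 ≤ ln * b j := mul_nonneg hln0 (hb0 j)
        linarith
      · have := hnbβ j
        have h1 : 0 ≤ lp * a j := mul_nonneg hlp0 (ha0 j)
        linarith
    have h1 : |w j * (ln * b j - lp * a j)| ≤ β * |w j| := by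
      rw [abs_mul, mul_comm]
      exact mul_le_mul_of_nonneg_right hc (abs_nonneg _)
    have h2 := neg_abs_le (w j * (ln * b j - lp * a j))
    linarith
  -- Assemble
  have key : lp * (P.card : ℝ) + ln * (N.card : ℝ) ≤ hingeObj A y β U w := by
    rw [hingeObj]
    have := step1
    rw [step2] at this
    linarith
  have e1 : lp * (P.card : ℝ) = sp * min sp β := by
    rw [← hsp2, pow_two, ← mul_assoc, hlpsp, mul_comm]
  have e2 : ln * (N.card : ℝ) = sq * min sq β := by
    rw [← hsq2, pow_two, ← mul_assoc, hlnsq, mul_comm]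
  rw [e1, e2] at key
  exact key

/-- Closed-form optimal solutions of the hinge-loss problem for whitened data and binary
labels: with `n₊`, `n₋` the class sizes, any output weights `w₁, w₂` obeying the
thresholding rules (`w₁ = √n₊` if `β < √n₊`, `w₁ ∈ [0,√n₊]` if `β = √n₊`, `w₁ = 0` if
`β > √n₊`; symmetrically `w₂`), combined with neurons `Aᵀ(y)₊/√n₊` resp. `Aᵀ(-y)₊/√n₋`
(replaced by `0` when the corresponding threshold is exceeded), attain the infimum of the
hinge objective over all widths and `‖u_j‖₂ ≤ 1`. -/
theorem stmt19 {n d : ℕ} (hnd : n ≤ d) (A : Matrix (Fin n) (Fin d) ℝ)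
    (hA : A * Aᵀ = 1) (y : Fin n → ℝ) (hy : ∀ i, y i = 1 ∨ y i = -1)
    (hp : 1 ≤ (Finset.univ.filter fun i => y i = 1).card)
    (hm : 1 ≤ (Finset.univ.filter fun i => y i = -1).card)
    (β : ℝ) (hβ : 0 < β) :
    let sp := Real.sqrt ((Finset.univ.filter fun i => y i = 1).card : ℝ)
    let sq := Real.sqrt ((Finset.univ.filter fun i => y i = -1).card : ℝ)
    let u1 : Fin d → ℝ := if sp < β then 0 else sp⁻¹ • Aᵀ.mulVec (reluV y)
    let u2 : Fin d → ℝ := if sq < β then 0 else sq⁻¹ • Aᵀ.mulVec (reluV (-y))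
    ∀ w1 w2 : ℝ,
      ((β < sp → w1 = sp) ∧ (β = sp → 0 ≤ w1 ∧ w1 ≤ sp) ∧ (sp < β → w1 = 0)) →
      ((β < sq → w2 = -sq) ∧ (β = sq → -sq ≤ w2 ∧ w2 ≤ 0) ∧ (sq < β → w2 = 0)) →
      (∀ j, l2norm (![u1, u2] j) ≤ 1) ∧
      hingeObj A y β ![u1, u2] ![w1, w2] =
        sInf {r : ℝ | ∃ (m : ℕ) (U : Fin m → Fin d → ℝ) (w : Fin m → ℝ),
          (∀ j, l2norm (U j) ≤ 1) ∧ r = hingeObj A y β U w} := by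
  intro sp sq u1 u2 w1 w2 hw1 hw2
  have hspdef : sp = Real.sqrt ((Finset.univ.filter fun i => y i = 1).card : ℝ) := rfl
  have hsqdef : sq = Real.sqrt ((Finset.univ.filter fun i => y i = -1).card : ℝ) := rfl
  have hu1def : u1 = if sp < β then 0 else sp⁻¹ • Aᵀ.mulVec (reluV y) := rfl
  have hu2def : u2 = if sq < β then 0 else sq⁻¹ • Aᵀ.mulVec (reluV (-y)) := rfl
  have hspc : (0:ℝ) < (((Finset.univ.filter fun i => y i = 1).card : ℕ) : ℝ) := by
    exact_mod_cast hp
  have hsqc : (0:ℝ) < (((Finset.univ.filter fun i => y i = -1).card : ℕ) : ℝ) := by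
    exact_mod_cast hm
  have hsp : 0 < sp := Real.sqrt_pos.mpr hspc
  have hsq : 0 < sq := Real.sqrt_pos.mpr hsqc
  have hsp2 : sp ^ 2 = (((Finset.univ.filter fun i => y i = 1).card : ℕ) : ℝ) :=
    Real.sq_sqrt hspc.le
  have hsq2 : sq ^ 2 = (((Finset.univ.filter fun i => y i = -1).card : ℕ) : ℝ) :=
    Real.sq_sqrt hsqc.le
  -- relu squares sums
  have hrelu1 : ∀ i, (reluV y i) ^ 2 = (if y i = 1 then (1:ℝ) else 0) := by
    intro i
    rcases hy i with h | h
    · rw [if_pos h]; simp [reluV, h]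
    · rw [if_neg (by rw [h]; norm_num)]; simp [reluV, h]
  have hrelu2 : ∀ i, (reluV (-y) i) ^ 2 = (if y i = 1 then (0:ℝ) else 1) := by
    intro i
    rcases hy i with h | h
    · rw [if_pos h]; simp [reluV, h]
    · rw [if_neg (by rw [h]; norm_num)]; simp [reluV, h]
  have hsum1 : ∑ i, (reluV y i) ^ 2 = sp ^ 2 := by
    rw [hsp2]
    simp_rw [hrelu1]
    rw [Finset.sum_ite, Finset.sum_const, Finset.sum_const]
    simp
  have hsum2 : ∑ i, (reluV (-y) i) ^ 2 = sq ^ 2 := by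
    rw [hsq2]
    have hNeq : (Finset.univ.filter fun i => ¬ y i = 1)
        = Finset.univ.filter fun i => y i = -1 := by
      ext i
      simp only [Finset.mem_filter, Finset.mem_univ, true_and]
      constructor
      · intro h; exact (hy i).resolve_left h
      · intro h h1; rw [h1] at h; norm_num at h
    simp_rw [hrelu2]
    rw [Finset.sum_ite, Finset.sum_const, Finset.sum_const, hNeq]
    simp
  -- feasibility
  have feas : ∀ j, l2norm (![u1, u2] j) ≤ 1 := by
    have f1 : l2norm u1 ≤ 1 := by
      rw [hu1def]
      by_cases hc : sp < β
      · rw [if_pos hc]; simp [l2norm]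
      · rw [if_neg hc, l2norm]
        have : ∑ k, ((sp⁻¹ • Aᵀ.mulVec (reluV y)) k) ^ 2 = 1 := by
          simp_rw [Pi.smul_apply, smul_eq_mul, mul_pow, ← Finset.mul_sum]
          rw [aux_trans_isometry A hA, hsum1]
          field_simp
        rw [this, Real.sqrt_one]
    have f2 : l2norm u2 ≤ 1 := by
      rw [hu2def]
      by_cases hc : sq < β
      · rw [if_pos hc]; simp [l2norm]
      · rw [if_neg hc, l2norm]
        have : ∑ k, ((sq⁻¹ • Aᵀ.mulVec (reluV (-y))) k) ^ 2 = 1 := by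
          simp_rw [Pi.smul_apply, smul_eq_mul, mul_pow, ← Finset.mul_sum]
          rw [aux_trans_isometry A hA, hsum2]
          field_simp
        rw [this, Real.sqrt_one]
    intro j
    fin_cases j
    · simpa using f1
    · simpa using f2
  refine ⟨feas, ?_⟩
  -- output of the candidate network
  have hg1 : ∀ i, w1 * max (A.mulVec u1 i) 0
      = w1 * sp⁻¹ * (if y i = 1 then 1 else 0) := by
    intro i
    by_cases hc : sp < β
    · have hw10 : w1 = 0 := hw1.2.2 hc
      simp [hw10]
    · have hu : u1 = sp⁻¹ • Aᵀ.mulVec (reluV y) := by rw [hu1def, if_neg hc]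
      rw [hu, mulVec_smul, mulVec_mulVec, hA, one_mulVec]
      rcases hy i with h | h
      · rw [if_pos h]
        simp only [Pi.smul_apply, smul_eq_mul, reluV, h]
        rw [show (1:ℝ) ⊔ 0 = 1 by norm_num, mul_one,
          show sp⁻¹ ⊔ 0 = sp⁻¹ from max_eq_left (by positivity), mul_one]
      · rw [if_neg (by rw [h]; norm_num)]
        simp only [Pi.smul_apply, smul_eq_mul, reluV, h]
        norm_num
  have hg2 : ∀ i, w2 * max (A.mulVec u2 i) 0
      = w2 * sq⁻¹ * (if y i = 1 then 0 else 1) := by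
    intro i
    by_cases hc : sq < β
    · have hw20 : w2 = 0 := hw2.2.2 hc
      simp [hw20]
    · have hu : u2 = sq⁻¹ • Aᵀ.mulVec (reluV (-y)) := by rw [hu2def, if_neg hc]
      rw [hu, mulVec_smul, mulVec_mulVec, hA, one_mulVec]
      rcases hy i with h | h
      · rw [if_pos h]
        simp only [Pi.smul_apply, smul_eq_mul, reluV, Pi.neg_apply, h]
        norm_num
      · rw [if_neg (by rw [h]; norm_num)]
        simp only [Pi.smul_apply, smul_eq_mul, reluV, Pi.neg_apply, h]
        rw [max_eq_left (a := sq⁻¹ * max (- -1) 0) (b := 0) (mul_nonneg (inv_nonneg.mpr hsq.le) (le_max_right _ _))]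
        norm_num
  have hout : ∀ i, bfOut A ![u1, u2] ![w1, w2] i
      = w1 * sp⁻¹ * (if y i = 1 then 1 else 0)
        + w2 * sq⁻¹ * (if y i = 1 then 0 else 1) := by
    intro i
    rw [bfOut, Fin.sum_univ_two]
    simp only [Matrix.cons_val_zero, Matrix.cons_val_one, Matrix.head_cons,
      Pi.add_apply, Pi.smul_apply, smul_eq_mul]
    rw [hg1 i, hg2 i]
  -- hinge terms
  have hterm : ∀ i, max 0 (1 - y i * bfOut A ![u1, u2] ![w1, w2] i)
      = if y i = 1 then max 0 (1 - w1 * sp⁻¹) else max 0 (1 - (-w2) * sq⁻¹) := by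
    intro i
    rw [hout i]
    rcases hy i with h | h
    · rw [if_pos h, if_pos h, if_pos h, h]
      ring_nf
    · rw [if_neg (by rw [h]; norm_num), if_neg (by rw [h]; norm_num),
        if_neg (by rw [h]; norm_num), h]
      ring_nf
  -- totals via aux_scalar
  obtain ⟨hval1, hw1nn⟩ := aux_scalar sp β w1 hsp hβ hw1
  have hw2' : (β < sq → -w2 = sq) ∧ (β = sq → 0 ≤ -w2 ∧ -w2 ≤ sq) ∧ (sq < β → -w2 = 0) := by
    obtain ⟨a1, a2, a3⟩ := hw2
    refine ⟨fun h => by rw [a1 h]; ring, fun h => ?_, fun h => by rw [a3 h]; ring⟩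
    obtain ⟨b1, b2⟩ := a2 h
    constructor <;> linarith
  obtain ⟨hval2, hw2nn⟩ := aux_scalar sq β (-w2) hsq hβ hw2'
  -- assemble the value
  have hvalue : hingeObj A y β ![u1, u2] ![w1, w2]
      = sp * min sp β + sq * min sq β := by
    rw [hingeObj]
    have hsum : ∑ i, max 0 (1 - y i * bfOut A ![u1, u2] ![w1, w2] i)
        = sp ^ 2 * max 0 (1 - w1 * sp⁻¹) + sq ^ 2 * max 0 (1 - (-w2) * sq⁻¹) := by
      simp_rw [hterm]
      rw [Finset.sum_ite, Finset.sum_const, Finset.sum_const]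
      have hNeq : (Finset.univ.filter fun i => ¬ y i = 1)
          = Finset.univ.filter fun i => y i = -1 := by
        ext i
        simp only [Finset.mem_filter, Finset.mem_univ, true_and]
        constructor
        · intro h; exact (hy i).resolve_left h
        · intro h h1; rw [h1] at h; norm_num at h
      rw [hNeq]
      simp only [nsmul_eq_mul]
      rw [← hsp2, ← hsq2]
    have hreg : ∑ j, |(![w1, w2]) j| = w1 + -w2 := by
      rw [Fin.sum_univ_two]
      simp only [Matrix.cons_val_zero, Matrix.cons_val_one, Matrix.head_cons]
      rw [abs_of_nonneg hw1nn, abs_of_nonpos (by linarith)]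
    rw [hsum, hreg]
    have : β * (w1 + -w2) = β * w1 + β * (-w2) := by ring
    rw [this]
    linarith
  -- the sInf argument
  set S : Set ℝ := {r : ℝ | ∃ (m : ℕ) (U : Fin m → Fin d → ℝ) (w : Fin m → ℝ),
      (∀ j, l2norm (U j) ≤ 1) ∧ r = hingeObj A y β U w} with hS
  have hmem : hingeObj A y β ![u1, u2] ![w1, w2] ∈ S :=
    ⟨2, ![u1, u2], ![w1, w2], feas, rfl⟩
  have hlb : ∀ r ∈ S, sp * min sp β + sq * min sq β ≤ r := by
    rintro r ⟨m, U, w, hU, rfl⟩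
    exact aux_lb A hA y hy β hβ hp hm U w hU
  apply le_antisymm
  · apply le_csInf ⟨_, hmem⟩
    intro r hr
    rw [hvalue]
    exact hlb r hr
  · exact csInf_le ⟨sp * min sp β + sq * min sq β, hlb⟩ hmem
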